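/- For the lazy dispersion process with parameter p (0 < p ≤ 1, possibly depending on n) and M = (1−δ)n particles on the complete graph K_n with loops: if δ = p/2 + α for some α > 0 (possibly depending on n), then there is an absolute constant C such that with probability at least 1 − C/n the dispersion time satisfies T_Disp ≤ C·(pα)^{−1}·log n. -/

import Mathlib

set_option maxHeartbeats 1000000


open MeasureTheory ProbabilityTheory
open scoped Classical BigOperators

/-- The lazy dispersion process on the complete graph `K_n` with loops, with `M`
particles all starting at the origin vertex `o`.  At each step an unhappy particle
(one sharing its vertex with another particle) moves iff its coin `B t i` shows `true`,
in which case it jumps to the uniformly random vertex `X t i ∈ [n]` (possibly its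
current one); happy particles, and unhappy particles whose coin shows `false`, stay. -/
noncomputable def lazyPos {n M : ℕ} (o : Fin n) (X : ℕ → Fin M → Fin n)
    (B : ℕ → Fin M → Bool) : ℕ → Fin M → Fin n
  | 0 => fun _ => o
  | t + 1 => fun i =>
      if (∃ j, j ≠ i ∧ lazyPos o X B t j = lazyPos o X B t i) ∧ B t i = true then
        X t i
      else lazyPos o X B t i

namespace LazyDisp

variable {n M : ℕ}



noncomputable def step (c : Fin M → Fin n) (y : Fin M → Fin n × Bool) : Fin M → Fin n :=
  fun i => if (∃ j, j ≠ i ∧ c j = c i) ∧ (y i).2 = true then (y i).1 else c i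

def Unh (c : Fin M → Fin n) (i : Fin M) : Prop := ∃ j, j ≠ i ∧ c j = c i

def Mv (c : Fin M → Fin n) (y : Fin M → Fin n × Bool) (i : Fin M) : Prop :=
  Unh c i ∧ (y i).2 = true

theorem step_eq (c : Fin M → Fin n) (y : Fin M → Fin n × Bool) (i : Fin M) :
    step c y i = if Mv c y i then (y i).1 else c i := by
  by_cases h : Mv c y i
  · rw [if_pos h]; exact if_pos h
  · rw [if_neg h]; exact if_neg h

def W (c : Fin M → Fin n) : ℕ :=
  ∑ w : Fin n, ((Finset.univ.filter (fun i => c i = w)).card - 1)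

noncomputable def GN (c : Fin M → Fin n) (y : Fin M → Fin n × Bool) (i : Fin M) : ℕ :=
  if (y i).2 = false ∧ ∃ j, j < i ∧ c j = c i ∧ (y j).2 = false then 1 else 0

noncomputable def HN (c : Fin M → Fin n) (y : Fin M → Fin n × Bool) (i : Fin M) : ℕ :=
  if Mv c y i ∧ ∃ j, j ≠ i ∧ step c y j = (y i).1 then 1 else 0

theorem card_sub_one_le'' (s : Finset (Fin M)) (f : Fin M → ℕ)
    (h : ∀ i ∈ s, (∃ j ∈ s, j < i) → 1 ≤ f i) :
    s.card - 1 ≤ ∑ i ∈ s, f i := by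
  rcases s.eq_empty_or_nonempty with rfl | hne
  · simp
  · have hm : s.min' hne ∈ s := s.min'_mem hne
    calc s.card - 1 = (s.erase (s.min' hne)).card := (Finset.card_erase_of_mem hm).symm
    _ = ∑ i ∈ s.erase (s.min' hne), 1 := by rw [Finset.sum_const, smul_eq_mul, mul_one]
    _ ≤ ∑ i ∈ s.erase (s.min' hne), f i := by
        apply Finset.sum_le_sum
        intro i hi
        rw [Finset.mem_erase] at hi
        exact h i hi.2 ⟨s.min' hne, hm, lt_of_le_of_ne (s.min'_le i hi.2) (Ne.symm hi.1)⟩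
    _ ≤ ∑ i ∈ s, f i := Finset.sum_le_sum_of_subset (s.erase_subset _)

theorem sum_ite_le (P : Fin n → Prop) [DecidablePred P] (a : Fin n) (v : ℕ)
    (h : ∀ w, P w → w = a) :
    (∑ w : Fin n, if P w then v else 0) ≤ v := by
  calc (∑ w : Fin n, if P w then v else 0) ≤ ∑ w : Fin n, if w = a then v else 0 := by
        apply Finset.sum_le_sum
        intro w _
        split_ifs with h1 h2 h3
        · exact le_rfl
        · exact absurd (h w h1) h2
        · exact Nat.zero_le _
        · exact le_rfl
  _ = v := by rw [Finset.sum_ite_eq' Finset.univ a (fun _ => v)]; simp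

theorem pointwise (c : Fin M → Fin n) (y : Fin M → Fin n × Bool) :
    W (step c y) ≤ ∑ i, (GN c y i + HN c y i) := by
  classical
  set d := step c y with hd
  have hdw : ∀ i w, d i = w ↔ ((¬ Mv c y i ∧ c i = w) ∨ (Mv c y i ∧ (y i).1 = w)) := by
    intro i w
    rw [hd, step_eq]
    by_cases h : Mv c y i
    · rw [if_pos h]; tauto
    · rw [if_neg h]; tauto
  have hF : ∀ w, (Finset.univ.filter (fun i => d i = w)).card
      = (Finset.univ.filter (fun i => ¬ Mv c y i ∧ c i = w)).card
        + (Finset.univ.filter (fun i => Mv c y i ∧ (y i).1 = w)).card := by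
    intro w
    have he : Finset.univ.filter (fun i => d i = w)
        = Finset.univ.filter (fun i => ¬ Mv c y i ∧ c i = w)
          ∪ Finset.univ.filter (fun i => Mv c y i ∧ (y i).1 = w) := by
      ext i
      simp only [Finset.mem_filter, Finset.mem_union, Finset.mem_univ, true_and]
      rw [hdw i w]
    rw [he]
    apply Finset.card_union_of_disjoint
    rw [Finset.disjoint_filter]
    tauto
  have pw : ∀ w, (Finset.univ.filter (fun i => d i = w)).card - 1
      ≤ (∑ i ∈ Finset.univ.filter (fun i => ¬ Mv c y i ∧ c i = w), GN c y i)
        + ∑ i ∈ Finset.univ.filter (fun i => Mv c y i ∧ (y i).1 = w), HN c y i := by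
    intro w
    by_cases hf : (Finset.univ.filter (fun i => d i = w)).card ≤ 1
    · have h0 : (Finset.univ.filter (fun i => d i = w)).card - 1 = 0 := by omega
      rw [h0]; exact Nat.zero_le _
    · push_neg at hf
      have hHN : ∀ i ∈ Finset.univ.filter (fun i => Mv c y i ∧ (y i).1 = w), HN c y i = 1 := by
        intro i hi
        rw [Finset.mem_filter] at hi
        obtain ⟨-, hmv, hyi⟩ := hi
        have hdi : d i = w := by rw [hdw]; right; exact ⟨hmv, hyi⟩
        obtain ⟨j, hj, hji⟩ := Finset.exists_mem_ne hf i
        rw [Finset.mem_filter] at hj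
        rw [HN, if_pos]
        exact ⟨hmv, ⟨j, hji, by rw [← hd, hj.2]; exact hyi.symm⟩⟩
      have hGN : ∀ i ∈ Finset.univ.filter (fun i => ¬ Mv c y i ∧ c i = w),
          (∃ j ∈ Finset.univ.filter (fun i => ¬ Mv c y i ∧ c i = w), j < i) → 1 ≤ GN c y i := by
        intro i hi hex
        rw [Finset.mem_filter] at hi
        obtain ⟨-, hnmv, hciw⟩ := hi
        obtain ⟨j, hjS, hji⟩ := hex
        rw [Finset.mem_filter] at hjS
        obtain ⟨-, hnmvj, hcjw⟩ := hjS
        have hcji : c j = c i := by rw [hcjw, hciw]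
        have hUi : Unh c i := ⟨j, ne_of_lt hji, hcji⟩
        have hUj : Unh c j := ⟨i, (ne_of_lt hji).symm, hcji.symm⟩
        have hyi : (y i).2 = false := by
          by_contra hc
          exact hnmv ⟨hUi, by simpa using hc⟩
        have hyj : (y j).2 = false := by
          by_contra hc
          exact hnmvj ⟨hUj, by simpa using hc⟩
        rw [GN, if_pos ⟨hyi, ⟨j, hji, hcji, hyj⟩⟩]
      have hS := card_sub_one_le'' (Finset.univ.filter (fun i => ¬ Mv c y i ∧ c i = w))
        (GN c y) hGN
      have hL : ∑ i ∈ Finset.univ.filter (fun i => Mv c y i ∧ (y i).1 = w), HN c y i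
          = (Finset.univ.filter (fun i => Mv c y i ∧ (y i).1 = w)).card := by
        rw [Finset.sum_congr rfl hHN]
        simp
      rw [hL, hF w]
      omega
  calc W d = ∑ w, ((Finset.univ.filter (fun i => d i = w)).card - 1) := rfl
  _ ≤ ∑ w, ((∑ i ∈ Finset.univ.filter (fun i => ¬ Mv c y i ∧ c i = w), GN c y i)
        + ∑ i ∈ Finset.univ.filter (fun i => Mv c y i ∧ (y i).1 = w), HN c y i) :=
      Finset.sum_le_sum (fun w _ => pw w)
  _ ≤ ∑ w, ((∑ i ∈ Finset.univ.filter (fun i => c i = w), GN c y i)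
        + ∑ i ∈ Finset.univ.filter (fun i => d i = w), HN c y i) := by
      apply Finset.sum_le_sum
      intro w _
      apply Nat.add_le_add
      · apply Finset.sum_le_sum_of_subset
        intro i hi
        rw [Finset.mem_filter] at hi ⊢
        exact ⟨hi.1, hi.2.2⟩
      · apply Finset.sum_le_sum_of_subset
        intro i hi
        rw [Finset.mem_filter] at hi ⊢
        refine ⟨hi.1, ?_⟩
        rw [hdw]
        right
        exact hi.2
  _ = (∑ w, ∑ i ∈ Finset.univ.filter (fun i => c i = w), GN c y i)
      + ∑ w, ∑ i ∈ Finset.univ.filter (fun i => d i = w), HN c y i := Finset.sum_add_distrib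
  _ = (∑ i, GN c y i) + ∑ i, HN c y i := by
      rw [Finset.sum_fiberwise Finset.univ c (GN c y), Finset.sum_fiberwise Finset.univ d (HN c y)]
  _ = ∑ i, (GN c y i + HN c y i) := Finset.sum_add_distrib.symm





noncomputable def q (n : ℕ) (p : ℝ) (b : Fin n × Bool) : ℝ :=
  if b.2 then p / n else (1 - p) / n

theorem q_nonneg {p : ℝ} (hp : 0 ≤ p) (hp1 : p ≤ 1) (b : Fin n × Bool) : 0 ≤ q n p b := by
  unfold q
  split
  · positivity
  · apply div_nonneg (by linarith) (by positivity)

theorem sum_q (hn : 0 < n) {p : ℝ} : ∑ b : Fin n × Bool, q n p b = 1 := by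
  rw [Fintype.sum_prod_type]
  have h : ∀ v : Fin n, ∑ b : Bool, q n p (v, b) = 1 / n := by
    intro v
    rw [Fintype.sum_bool]
    show p / n + (1 - p) / n = 1 / n
    ring
  rw [Finset.sum_congr rfl (fun v _ => h v), Finset.sum_const, Finset.card_univ,
    Fintype.card_fin, nsmul_eq_mul]
  have : (n:ℝ) ≠ 0 := Nat.cast_ne_zero.mpr hn.ne'
  field_simp

theorem sum_nu_prod (hn : 0 < n) {p : ℝ} (s : Finset (Fin M)) (f : Fin M → (Fin n × Bool) → ℝ) :
    ∑ y : Fin M → Fin n × Bool, (∏ i, q n p (y i)) * ∏ j ∈ s, f j (y j)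
      = ∏ j ∈ s, (∑ b : Fin n × Bool, q n p b * f j b) := by
  have h1 : ∀ y : Fin M → Fin n × Bool, (∏ i, q n p (y i)) * ∏ j ∈ s, f j (y j)
      = ∏ i, (q n p (y i) * if i ∈ s then f i (y i) else 1) := by
    intro y
    rw [Finset.prod_mul_distrib]
    congr 1
    rw [Finset.prod_ite_mem, Finset.univ_inter]
  simp_rw [h1]
  have hps := Fintype.prod_sum (ι := Fin M) (κ := fun _ => Fin n × Bool)
    (fun i b => q n p b * if i ∈ s then f i b else 1)
  rw [← hps]
  have h2 : ∀ i, (∑ b : Fin n × Bool, q n p b * if i ∈ s then f i b else 1)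
      = if i ∈ s then (∑ b : Fin n × Bool, q n p b * f i b) else 1 := by
    intro i
    split <;> simp [sum_q hn]
  rw [Finset.prod_congr rfl (fun i _ => h2 i), Finset.prod_ite_mem, Finset.univ_inter]

theorem rank_sum {p : ℝ} (hp0 : 0 ≤ p) (hp1 : p ≤ 1) (s : Finset (Fin M)) :
    1 - p ^ s.card ≤ ∑ i ∈ s, (1 - p) * p ^ (s.filter (fun j => j < i)).card := by
  induction s using Finset.induction_on_max with
  | empty => simp
  | insert a s ha ih =>
    have hans : a ∉ s := fun h => absurd (ha a h) (lt_irrefl a)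
    rw [Finset.sum_insert hans, Finset.card_insert_of_notMem hans]
    have h1 : (Finset.filter (fun j => j < a) (insert a s)) = s := by
      ext x
      simp only [Finset.mem_filter, Finset.mem_insert]
      constructor
      · rintro ⟨rfl | hx, hlt⟩
        · exact absurd hlt (lt_irrefl _)
        · exact hx
      · exact fun hx => ⟨Or.inr hx, ha x hx⟩
    have h2 : ∀ i ∈ s, ((insert a s).filter (fun j => j < i)).card
        = (s.filter (fun j => j < i)).card := by
      intro i hi
      congr 1
      ext x
      simp only [Finset.mem_filter, Finset.mem_insert]
      constructor
      · rintro ⟨rfl | hx, hlt⟩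
        · exact absurd hlt (not_lt.mpr (ha i hi).le)
        · exact ⟨hx, hlt⟩
      · exact fun ⟨hx, hlt⟩ => ⟨Or.inr hx, hlt⟩
    rw [h1, Finset.sum_congr rfl (fun i hi => by rw [h2 i hi])]
    have hpk : (0:ℝ) ≤ p ^ s.card := pow_nonneg hp0 _
    rw [pow_succ]
    nlinarith [ih]

theorem card_sub_one_le (s : Finset (Fin M)) :
    s.card - 1 ≤ (s.filter (fun i => ∃ j ∈ s, j < i)).card := by
  rcases s.eq_empty_or_nonempty with rfl | hne
  · simp
  · have hm : s.min' hne ∈ s := s.min'_mem hne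
    have hsub : s.erase (s.min' hne) ⊆ s.filter (fun i => ∃ j ∈ s, j < i) := by
      intro i hi
      rw [Finset.mem_erase] at hi
      rw [Finset.mem_filter]
      exact ⟨hi.2, ⟨s.min' hne, hm, lt_of_le_of_ne (s.min'_le i hi.2) (Ne.symm hi.1)⟩⟩
    calc s.card - 1 = (s.erase (s.min' hne)).card := (Finset.card_erase_of_mem hm).symm
    _ ≤ _ := Finset.card_le_card hsub

noncomputable def g (o : Fin n) : (t : ℕ) → (Fin t → Fin M → Fin n × Bool) → (Fin M → Fin n)
  | 0, _ => fun _ => o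
  | t+1, z => step (g o t (fun s => z s.castSucc)) (z (Fin.last t))

theorem bridge (o : Fin n) (X : ℕ → Fin M → Fin n) (B : ℕ → Fin M → Bool) (t : ℕ) :
    lazyPos o X B t = g o t (fun s i => (X (s : ℕ) i, B (s : ℕ) i)) := by
  induction t with
  | zero => rfl
  | succ t ih =>
      funext i
      show (if (∃ j, j ≠ i ∧ lazyPos o X B t j = lazyPos o X B t i) ∧ B t i = true then
        X t i else lazyPos o X B t i) = _
      rw [g]
      simp only [step, Fin.val_last, Fin.coe_castSucc, ih]

theorem one_le_W {c : Fin M → Fin n} (h : ¬ Function.Injective c) : 1 ≤ W c := by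
  rw [Function.not_injective_iff] at h
  obtain ⟨a, b, hab, hne⟩ := h
  have h2 : 2 ≤ (Finset.univ.filter (fun i => c i = c a)).card := by
    have : ({a, b} : Finset (Fin M)) ⊆ Finset.univ.filter (fun i => c i = c a) := by
      intro x hx
      simp only [Finset.mem_insert, Finset.mem_singleton] at hx
      rcases hx with rfl | rfl <;> simp [hab]
    calc 2 = ({a, b} : Finset (Fin M)).card := by rw [Finset.card_insert_of_notMem (by simpa using hne), Finset.card_singleton]
    _ ≤ _ := Finset.card_le_card this
  calc 1 ≤ (Finset.univ.filter (fun i => c i = c a)).card - 1 := by omega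
  _ ≤ W c := Finset.single_le_sum (f := fun w => (Finset.univ.filter (fun i => c i = w)).card - 1) (fun _ _ => Nat.zero_le _) (Finset.mem_univ (c a))

theorem sum_q_stay (hn : 0 < n) (p : ℝ) :
    ∑ b : Fin n × Bool, q n p b * (if b.2 = false then (1:ℝ) else 0) = 1 - p := by
  rw [Fintype.sum_prod_type]
  have h : ∀ v : Fin n, ∑ bb : Bool, q n p (v, bb) * (if (v, bb).2 = false then (1:ℝ) else 0)
      = (1-p)/n := by
    intro v
    rw [Fintype.sum_bool]
    simp [q]
  rw [Finset.sum_congr rfl (fun v _ => h v), Finset.sum_const, Finset.card_univ,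
    Fintype.card_fin, nsmul_eq_mul]
  have hne : (n:ℝ) ≠ 0 := Nat.cast_ne_zero.mpr hn.ne'
  field_simp

theorem sum_q_move (hn : 0 < n) (p : ℝ) :
    ∑ b : Fin n × Bool, q n p b * (if b.2 = true then (1:ℝ) else 0) = p := by
  rw [Fintype.sum_prod_type]
  have h : ∀ v : Fin n, ∑ bb : Bool, q n p (v, bb) * (if (v, bb).2 = true then (1:ℝ) else 0)
      = p/n := by
    intro v
    rw [Fintype.sum_bool]
    simp [q]
  rw [Finset.sum_congr rfl (fun v _ => h v), Finset.sum_const, Finset.card_univ,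
    Fintype.card_fin, nsmul_eq_mul]
  have hne : (n:ℝ) ≠ 0 := Nat.cast_ne_zero.mpr hn.ne'
  field_simp

theorem sum_q_eq (p : ℝ) (a : Fin n × Bool) :
    ∑ b : Fin n × Bool, q n p b * (if b = a then (1:ℝ) else 0) = q n p a := by
  have h : ∀ b : Fin n × Bool, q n p b * (if b = a then (1:ℝ) else 0)
      = if b = a then q n p b else 0 := by
    intro b
    split_ifs <;> ring
  rw [Finset.sum_congr rfl (fun b _ => h b), Finset.sum_ite_eq' Finset.univ a (q n p)]
  simp

theorem sum_q_land (p : ℝ) (v : Fin n) :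
    ∑ b : Fin n × Bool, q n p b * (if (b.2 = true ∧ v = b.1) then (1:ℝ) else 0) = p / n := by
  have h : ∀ b : Fin n × Bool, q n p b * (if (b.2 = true ∧ v = b.1) then (1:ℝ) else 0)
      = q n p b * (if b = (v, true) then (1:ℝ) else 0) := by
    intro b
    congr 1
    apply if_congr _ rfl rfl
    constructor
    · rintro ⟨h2, h1⟩
      exact Prod.ext h1.symm h2
    · rintro rfl
      exact ⟨rfl, rfl⟩
  rw [Finset.sum_congr rfl (fun b _ => h b), sum_q_eq]
  simp [q]

theorem sumG (hn : 0 < n) (p : ℝ) (c : Fin M → Fin n) (i : Fin M) :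
    ∑ y : Fin M → Fin n × Bool, (∏ k, q n p (y k)) * (GN c y i : ℝ)
      = (1 - p) * (1 - p ^ (Finset.univ.filter (fun j => j < i ∧ c j = c i)).card) := by
  classical
  set s := Finset.univ.filter (fun j => j < i ∧ c j = c i) with hs
  have his : i ∉ s := by
    rw [hs, Finset.mem_filter]
    rintro ⟨-, h, -⟩
    exact lt_irrefl i h
  have hpt : ∀ y : Fin M → Fin n × Bool, (GN c y i : ℝ)
      = (∏ j ∈ ({i} : Finset (Fin M)), (if (y j).2 = false then (1:ℝ) else 0))
        - ∏ j ∈ insert i s, (if j = i then (if (y j).2 = false then (1:ℝ) else 0)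
            else (if (y j).2 = true then (1:ℝ) else 0)) := by
    intro y
    rw [GN, Finset.prod_singleton, Finset.prod_insert his, if_pos rfl]
    have hcongr : ∀ j ∈ s, (if j = i then (if (y j).2 = false then (1:ℝ) else 0)
        else (if (y j).2 = true then (1:ℝ) else 0)) = (if (y j).2 = true then (1:ℝ) else 0) := by
      intro j hj
      rw [if_neg (ne_of_mem_of_not_mem hj his)]
    rw [Finset.prod_congr rfl hcongr]
    by_cases h1 : (y i).2 = false
    · by_cases h2 : ∃ j, j < i ∧ c j = c i ∧ (y j).2 = false
      · rw [if_pos ⟨h1, h2⟩, if_pos h1]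
        obtain ⟨j, hj1, hj2, hj3⟩ := h2
        have hjs : j ∈ s := by
          rw [hs, Finset.mem_filter]
          exact ⟨Finset.mem_univ _, hj1, hj2⟩
        rw [Finset.prod_eq_zero hjs (by rw [hj3]; norm_num)]
        norm_num
      · rw [if_neg, if_pos h1]
        · have hall : ∀ j ∈ s, (if (y j).2 = true then (1:ℝ) else 0) = 1 := by
            intro j hj
            rw [hs, Finset.mem_filter] at hj
            have hyj : (y j).2 = true := by
              by_contra hc
              exact h2 ⟨j, hj.2.1, hj.2.2, by simpa using hc⟩
            rw [if_pos hyj]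
          rw [Finset.prod_congr rfl hall, Finset.prod_const_one]
          norm_num
        · rintro ⟨-, h⟩
          exact h2 h
    · rw [if_neg, if_neg h1]
      · norm_num
      · rintro ⟨h, -⟩
        exact h1 h
  calc ∑ y : Fin M → Fin n × Bool, (∏ k, q n p (y k)) * (GN c y i : ℝ)
      = (∑ y : Fin M → Fin n × Bool, (∏ k, q n p (y k))
          * ∏ j ∈ ({i} : Finset (Fin M)), (if (y j).2 = false then (1:ℝ) else 0))
        - ∑ y : Fin M → Fin n × Bool, (∏ k, q n p (y k))
          * ∏ j ∈ insert i s, (if j = i then (if (y j).2 = false then (1:ℝ) else 0)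
              else (if (y j).2 = true then (1:ℝ) else 0)) := by
        rw [← Finset.sum_sub_distrib]
        apply Finset.sum_congr rfl
        intro y _
        rw [hpt y]
        ring
  _ = (∏ j ∈ ({i} : Finset (Fin M)),
          ∑ b : Fin n × Bool, q n p b * (if b.2 = false then (1:ℝ) else 0))
      - ∏ j ∈ insert i s, ∑ b : Fin n × Bool, q n p b
          * (if j = i then (if b.2 = false then (1:ℝ) else 0)
              else (if b.2 = true then (1:ℝ) else 0)) := by
        have e1 : (∑ y : Fin M → Fin n × Bool, (∏ k, q n p (y k))
            * ∏ j ∈ ({i} : Finset (Fin M)), (if (y j).2 = false then (1:ℝ) else 0))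
            = ∏ j ∈ ({i} : Finset (Fin M)),
                ∑ b : Fin n × Bool, q n p b * (if b.2 = false then (1:ℝ) else 0) :=
          sum_nu_prod hn ({i} : Finset (Fin M))
            (fun _ b => if b.2 = false then (1:ℝ) else 0)
        have e2 : (∑ y : Fin M → Fin n × Bool, (∏ k, q n p (y k))
            * ∏ j ∈ insert i s, (if j = i then (if (y j).2 = false then (1:ℝ) else 0)
                else (if (y j).2 = true then (1:ℝ) else 0)))
            = ∏ j ∈ insert i s, ∑ b : Fin n × Bool, q n p b
                * (if j = i then (if b.2 = false then (1:ℝ) else 0)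
                    else (if b.2 = true then (1:ℝ) else 0)) :=
          sum_nu_prod hn (insert i s)
            (fun j b => if j = i then (if b.2 = false then (1:ℝ) else 0)
                else (if b.2 = true then (1:ℝ) else 0))
        rw [e1, e2]
  _ = (1 - p) - (1 - p) * p ^ s.card := by
        rw [Finset.prod_singleton, sum_q_stay hn, Finset.prod_insert his]
        have hfi : (∑ b : Fin n × Bool, q n p b
            * (if i = i then (if b.2 = false then (1:ℝ) else 0)
                else (if b.2 = true then (1:ℝ) else 0))) = 1 - p := by
          rw [Finset.sum_congr rfl (fun b _ => by rw [if_pos rfl])]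
          exact sum_q_stay hn p
        have hfj : ∀ j ∈ s, (∑ b : Fin n × Bool, q n p b
            * (if j = i then (if b.2 = false then (1:ℝ) else 0)
                else (if b.2 = true then (1:ℝ) else 0))) = p := by
          intro j hj
          rw [Finset.sum_congr rfl (fun b _ => by rw [if_neg (ne_of_mem_of_not_mem hj his)])]
          exact sum_q_move hn p
        rw [hfi, Finset.prod_congr rfl hfj, Finset.prod_const]
  _ = (1 - p) * (1 - p ^ s.card) := by ring
theorem nu_nonneg {p : ℝ} (hp0 : 0 ≤ p) (hp1 : p ≤ 1) (y : Fin M → Fin n × Bool) :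
    0 ≤ ∏ k, q n p (y k) :=
  Finset.prod_nonneg fun k _ => q_nonneg hp0 hp1 _

theorem keyH (hn : 0 < n) {p : ℝ} (c : Fin M → Fin n) (i j : Fin M) (hji : j ≠ i) :
    (∑ y : Fin M → Fin n × Bool, (∏ k, q n p (y k))
        * (if ((y i).2 = true ∧ step c y j = (y i).1) then (1:ℝ) else 0)) = p / n := by
  classical
  have hji' : j ∉ ({i} : Finset (Fin M)) := by simp [hji]
  have hij : ¬ (i = j) := fun h => hji h.symm
  set ψ : Fin n × Bool → Fin n :=
    fun b => if (∃ k, k ≠ j ∧ c k = c j) ∧ b.2 = true then b.1 else c j with hψd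
  have e1 : (∑ y : Fin M → Fin n × Bool, (∏ k, q n p (y k))
        * (if ((y i).2 = true ∧ step c y j = (y i).1) then (1:ℝ) else 0))
      = ∑ y : Fin M → Fin n × Bool, (∏ k, q n p (y k))
        * ∑ a : Fin n × Bool, ∏ k ∈ insert j ({i} : Finset (Fin M)),
            (if k = j then (if (y k) = a then (1:ℝ) else 0)
              else (if ((y k).2 = true ∧ ψ a = (y k).1) then (1:ℝ) else 0)) := by
    apply Finset.sum_congr rfl
    intro y _
    congr 1
    have h1 : ∀ a : Fin n × Bool, (∏ k ∈ insert j ({i} : Finset (Fin M)),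
        (if k = j then (if (y k) = a then (1:ℝ) else 0)
          else (if ((y k).2 = true ∧ ψ a = (y k).1) then (1:ℝ) else 0)))
        = (if (y j) = a then (1:ℝ) else 0)
          * (if ((y i).2 = true ∧ ψ a = (y i).1) then (1:ℝ) else 0) := by
      intro a
      rw [Finset.prod_insert hji', Finset.prod_singleton, if_pos rfl, if_neg hij]
    rw [Finset.sum_congr rfl (fun a _ => h1 a)]
    have h2 : ∀ a : Fin n × Bool, (if (y j) = a then (1:ℝ) else 0)
        * (if ((y i).2 = true ∧ ψ a = (y i).1) then (1:ℝ) else 0)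
        = if (y j) = a then (if ((y i).2 = true ∧ ψ a = (y i).1) then (1:ℝ) else 0) else 0 := by
      intro a
      split_ifs <;> simp
    rw [Finset.sum_congr rfl (fun a _ => h2 a),
      Finset.sum_ite_eq Finset.univ (y j)
        (fun a => if ((y i).2 = true ∧ ψ a = (y i).1) then (1:ℝ) else 0),
      if_pos (Finset.mem_univ _)]
    exact (if_congr Iff.rfl rfl rfl).symm
  have e2 : (∑ y : Fin M → Fin n × Bool, (∏ k, q n p (y k))
        * ∑ a : Fin n × Bool, ∏ k ∈ insert j ({i} : Finset (Fin M)),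
            (if k = j then (if (y k) = a then (1:ℝ) else 0)
              else (if ((y k).2 = true ∧ ψ a = (y k).1) then (1:ℝ) else 0)))
      = ∑ a : Fin n × Bool, ∑ y : Fin M → Fin n × Bool, (∏ k, q n p (y k))
        * ∏ k ∈ insert j ({i} : Finset (Fin M)),
            (if k = j then (if (y k) = a then (1:ℝ) else 0)
              else (if ((y k).2 = true ∧ ψ a = (y k).1) then (1:ℝ) else 0)) := by
    rw [Finset.sum_congr rfl (fun y (_ : y ∈ Finset.univ) => Finset.mul_sum Finset.univ _ _)]
    exact Finset.sum_comm
  have e3 : ∀ a : Fin n × Bool, (∑ y : Fin M → Fin n × Bool, (∏ k, q n p (y k))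
        * ∏ k ∈ insert j ({i} : Finset (Fin M)),
            (if k = j then (if (y k) = a then (1:ℝ) else 0)
              else (if ((y k).2 = true ∧ ψ a = (y k).1) then (1:ℝ) else 0)))
      = ∏ k ∈ insert j ({i} : Finset (Fin M)), ∑ b : Fin n × Bool, q n p b
          * (if k = j then (if b = a then (1:ℝ) else 0)
              else (if (b.2 = true ∧ ψ a = b.1) then (1:ℝ) else 0)) := by
    intro a
    exact sum_nu_prod hn (insert j ({i} : Finset (Fin M)))
      (fun k b => if k = j then (if b = a then (1:ℝ) else 0)
        else (if (b.2 = true ∧ ψ a = b.1) then (1:ℝ) else 0))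
  have e4 : ∀ a : Fin n × Bool, (∏ k ∈ insert j ({i} : Finset (Fin M)),
      ∑ b : Fin n × Bool, q n p b
          * (if k = j then (if b = a then (1:ℝ) else 0)
              else (if (b.2 = true ∧ ψ a = b.1) then (1:ℝ) else 0)))
      = q n p a * (p / n) := by
    intro a
    rw [Finset.prod_insert hji', Finset.prod_singleton]
    have hj1 : (∑ b : Fin n × Bool, q n p b
        * (if j = j then (if b = a then (1:ℝ) else 0)
            else (if (b.2 = true ∧ ψ a = b.1) then (1:ℝ) else 0))) = q n p a := by
      rw [Finset.sum_congr rfl (fun b (_ : b ∈ Finset.univ) => by rw [if_pos rfl])]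
      exact sum_q_eq p a
    have hj2 : (∑ b : Fin n × Bool, q n p b
        * (if i = j then (if b = a then (1:ℝ) else 0)
            else (if (b.2 = true ∧ ψ a = b.1) then (1:ℝ) else 0))) = p / n := by
      rw [Finset.sum_congr rfl (fun b (_ : b ∈ Finset.univ) => by rw [if_neg hij])]
      exact sum_q_land p (ψ a)
    rw [hj1, hj2]
  rw [e1, e2, Finset.sum_congr rfl (fun a _ => (e3 a).trans (e4 a)), ← Finset.sum_mul,
    sum_q hn, one_mul]

theorem sumH (hn : 0 < n) {p : ℝ} (hp0 : 0 ≤ p) (hp1 : p ≤ 1) (c : Fin M → Fin n) (i : Fin M) :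
    ∑ y : Fin M → Fin n × Bool, (∏ k, q n p (y k)) * (HN c y i : ℝ)
      ≤ if Unh c i then ((M - 1 : ℕ) : ℝ) * (p / n) else 0 := by
  classical
  by_cases hU : Unh c i
  · rw [if_pos hU]
    have hpt : ∀ y : Fin M → Fin n × Bool, (HN c y i : ℝ)
        ≤ ∑ j ∈ Finset.univ.erase i,
            (if ((y i).2 = true ∧ step c y j = (y i).1) then (1:ℝ) else 0) := by
      intro y
      by_cases hH : Mv c y i ∧ ∃ j, j ≠ i ∧ step c y j = (y i).1
      · obtain ⟨⟨-, hb⟩, j, hji, hst⟩ := hH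
        have h1 : HN c y i = 1 := by
          rw [HN, if_pos]
          exact ⟨⟨hU, hb⟩, j, hji, hst⟩
        rw [h1]
        have hjm : j ∈ Finset.univ.erase i := Finset.mem_erase.mpr ⟨hji, Finset.mem_univ _⟩
        have hs := Finset.single_le_sum (f := fun j =>
            (if ((y i).2 = true ∧ step c y j = (y i).1) then (1:ℝ) else 0))
          (fun j _ => by positivity) hjm
        beta_reduce at hs
        rw [if_pos ⟨hb, hst⟩] at hs
        exact_mod_cast hs
      · have h0 : HN c y i = 0 := by
          rw [HN, if_neg]
          intro hc
          exact hH ⟨hc.1, hc.2⟩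
        rw [h0]
        push_cast
        exact Finset.sum_nonneg (fun j _ => by positivity)
    have s1 : ∑ y : Fin M → Fin n × Bool, (∏ k, q n p (y k)) * (HN c y i : ℝ)
        ≤ ∑ y : Fin M → Fin n × Bool, (∏ k, q n p (y k))
          * ∑ j ∈ Finset.univ.erase i,
              (if ((y i).2 = true ∧ step c y j = (y i).1) then (1:ℝ) else 0) := by
      apply Finset.sum_le_sum
      intro y _
      exact mul_le_mul_of_nonneg_left (hpt y) (nu_nonneg hp0 hp1 y)
    have s2 : (∑ y : Fin M → Fin n × Bool, (∏ k, q n p (y k))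
          * ∑ j ∈ Finset.univ.erase i,
              (if ((y i).2 = true ∧ step c y j = (y i).1) then (1:ℝ) else 0))
        = ∑ j ∈ Finset.univ.erase i, ∑ y : Fin M → Fin n × Bool, (∏ k, q n p (y k))
          * (if ((y i).2 = true ∧ step c y j = (y i).1) then (1:ℝ) else 0) := by
      rw [Finset.sum_congr rfl (fun y (_ : y ∈ Finset.univ) => Finset.mul_sum _ _ _)]
      exact Finset.sum_comm
    have s3 : (∑ j ∈ Finset.univ.erase i, ∑ y : Fin M → Fin n × Bool, (∏ k, q n p (y k))
          * (if ((y i).2 = true ∧ step c y j = (y i).1) then (1:ℝ) else 0))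
        = ((M - 1 : ℕ) : ℝ) * (p / n) := by
      rw [Finset.sum_congr rfl (fun j hj => keyH hn c i j (Finset.mem_erase.mp hj).1),
        Finset.sum_const, Finset.card_erase_of_mem (Finset.mem_univ _), Finset.card_univ,
        Fintype.card_fin, nsmul_eq_mul]
    calc ∑ y : Fin M → Fin n × Bool, (∏ k, q n p (y k)) * (HN c y i : ℝ) ≤ _ := s1
    _ = _ := s2
    _ = _ := s3
  · rw [if_neg hU]
    apply le_of_eq
    apply Finset.sum_eq_zero
    intro y _
    have h0 : HN c y i = 0 := by
      rw [HN, if_neg]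
      rintro ⟨⟨hu, -⟩, -⟩
      exact hU hu
    rw [h0]
    norm_num
theorem core (hn : 0 < n) {p α δ : ℝ} (hp : 0 < p) (hp1 : p ≤ 1) (hα : 0 < α)
    (hδ : δ = p / 2 + α) (hM : (M : ℝ) = (1 - δ) * n) (c : Fin M → Fin n) :
    ∑ y : Fin M → Fin n × Bool, (∏ k, q n p (y k)) * (W (step c y) : ℝ)
      ≤ (1 - p * α) * (W c : ℝ) := by
  classical
  have hnR : (0:ℝ) < n := by exact_mod_cast hn
  have hδn : 1 - δ = (M : ℝ) / n := by
    rw [hM]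
    field_simp
  have s1 : ∑ y : Fin M → Fin n × Bool, (∏ k, q n p (y k)) * (W (step c y) : ℝ)
      ≤ ∑ y : Fin M → Fin n × Bool, (∏ k, q n p (y k))
        * (∑ i, ((GN c y i : ℝ) + (HN c y i : ℝ))) := by
    apply Finset.sum_le_sum
    intro y _
    apply mul_le_mul_of_nonneg_left _ (nu_nonneg hp.le hp1 y)
    calc (W (step c y) : ℝ) ≤ ((∑ i, (GN c y i + HN c y i) : ℕ) : ℝ) := by
          exact_mod_cast pointwise c y
    _ = ∑ i, ((GN c y i : ℝ) + (HN c y i : ℝ)) := by push_cast; ring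
  have s2 : (∑ y : Fin M → Fin n × Bool, (∏ k, q n p (y k))
        * (∑ i, ((GN c y i : ℝ) + (HN c y i : ℝ))))
      = ∑ i, ((∑ y : Fin M → Fin n × Bool, (∏ k, q n p (y k)) * (GN c y i : ℝ))
          + ∑ y : Fin M → Fin n × Bool, (∏ k, q n p (y k)) * (HN c y i : ℝ)) := by
    rw [Finset.sum_congr rfl (fun y (_ : y ∈ Finset.univ) => Finset.mul_sum _ _ _),
      Finset.sum_comm]
    apply Finset.sum_congr rfl
    intro i _
    rw [← Finset.sum_add_distrib]
    apply Finset.sum_congr rfl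
    intro y _
    ring
  have s3 : ∑ i, ((∑ y : Fin M → Fin n × Bool, (∏ k, q n p (y k)) * (GN c y i : ℝ))
          + ∑ y : Fin M → Fin n × Bool, (∏ k, q n p (y k)) * (HN c y i : ℝ))
      ≤ ∑ i, ((1 - p) * (1 - p ^ (Finset.univ.filter (fun j => j < i ∧ c j = c i)).card)
          + (if Unh c i then ((M - 1 : ℕ) : ℝ) * (p / n) else 0)) := by
    apply Finset.sum_le_sum
    intro i _
    exact add_le_add (le_of_eq (sumG hn p c i)) (sumH hn hp.le hp1 c i)
  set F : Fin M → ℝ := fun i =>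
    (1 - p) * (1 - p ^ (Finset.univ.filter (fun j => j < i ∧ c j = c i)).card)
      + (if Unh c i then ((M - 1 : ℕ) : ℝ) * (p / n) else 0) with hF
  have s4 : ∑ i, F i = ∑ w : Fin n, ∑ i ∈ Finset.univ.filter (fun i => c i = w), F i :=
    (Finset.sum_fiberwise Finset.univ c F).symm
  have s5 : ∀ w : Fin n, ∑ i ∈ Finset.univ.filter (fun i => c i = w), F i
      ≤ (1 - p * α) * (((Finset.univ.filter (fun i => c i = w)).card - 1 : ℕ) : ℝ) := by
    intro w
    set fib := Finset.univ.filter (fun i => c i = w) with hfib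
    by_cases hk1 : fib.card ≤ 1
    · rcases Nat.le_one_iff_eq_zero_or_eq_one.mp hk1 with h0 | h1
      · rw [Finset.card_eq_zero.mp h0]
        simp
      · obtain ⟨i0, hi0⟩ := Finset.card_eq_one.mp h1
        have hi0m : c i0 = w := by
          have hmem : i0 ∈ fib := by rw [hi0]; exact Finset.mem_singleton_self i0
          rw [hfib, Finset.mem_filter] at hmem
          exact hmem.2
        have hU : ¬ Unh c i0 := by
          rintro ⟨j, hji, hcj⟩
          have hjm : j ∈ fib := by
            rw [hfib, Finset.mem_filter]
            exact ⟨Finset.mem_univ _, by rw [hcj, hi0m]⟩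
          rw [hi0, Finset.mem_singleton] at hjm
          exact hji hjm
        have hr : (Finset.univ.filter (fun j => j < i0 ∧ c j = c i0)).card = 0 := by
          rw [Finset.card_eq_zero, Finset.eq_empty_iff_forall_notMem]
          intro j hj
          rw [Finset.mem_filter] at hj
          exact hU ⟨j, ne_of_lt hj.2.1, hj.2.2⟩
        rw [hi0, Finset.sum_singleton]
        simp only [hF, hr, pow_zero, sub_self, mul_zero, if_neg hU, add_zero, zero_add]
        simp
    · push_neg at hk1
      have hk2 : 2 ≤ fib.card := hk1
      have hMge : 2 ≤ M := by
        calc 2 ≤ fib.card := hk2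
        _ ≤ Finset.univ.card := Finset.card_le_card (Finset.subset_univ _)
        _ = M := by rw [Finset.card_univ, Fintype.card_fin]
      have hUall : ∀ i ∈ fib, Unh c i := by
        intro i hi
        obtain ⟨j, hj, hji⟩ := Finset.exists_mem_ne hk1 i
        rw [hfib, Finset.mem_filter] at hi hj
        exact ⟨j, hji, by rw [hj.2, hi.2]⟩
      have hrank : ∀ i ∈ fib, (Finset.univ.filter (fun j => j < i ∧ c j = c i))
          = fib.filter (fun j => j < i) := by
        intro i hi
        rw [hfib, Finset.mem_filter] at hi
        rw [hfib, Finset.filter_filter]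
        apply Finset.filter_congr
        intro j _
        rw [hi.2]
        tauto
      have hsplit : ∑ i ∈ fib, F i
          = (∑ i ∈ fib, (1 - p) * (1 - p ^ (fib.filter (fun j => j < i)).card))
            + fib.card * (((M - 1 : ℕ) : ℝ) * (p / n)) := by
        simp only [hF]
        rw [Finset.sum_add_distrib]
        congr 1
        · apply Finset.sum_congr rfl
          intro i hi
          rw [hrank i hi]
        · rw [Finset.sum_congr rfl (fun i hi => if_pos (hUall i hi)), Finset.sum_const,
            nsmul_eq_mul]
      rw [hsplit]
      have hexp : ∑ i ∈ fib, (1 - p) * (1 - p ^ (fib.filter (fun j => j < i)).card)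
          = fib.card * (1 - p)
            - ∑ i ∈ fib, (1 - p) * p ^ (fib.filter (fun j => j < i)).card := by
        rw [Finset.sum_congr rfl (fun i (_ : i ∈ fib) =>
          (mul_sub (1-p) 1 (p ^ (fib.filter (fun j => j < i)).card)).trans
            (by rw [mul_one]))]
        rw [Finset.sum_sub_distrib, Finset.sum_const, nsmul_eq_mul]
      rw [hexp]
      have hrk := rank_sum hp.le hp1 fib
      have hkR : (2:ℝ) ≤ (fib.card : ℝ) := by exact_mod_cast hk2
      have hkR0 : (0:ℝ) ≤ (fib.card : ℝ) := Nat.cast_nonneg _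
      have hcast1 : (((fib.card) - 1 : ℕ) : ℝ) = (fib.card : ℝ) - 1 := by
        have h1 : 1 ≤ fib.card := by omega
        push_cast [h1]
        ring
      have hMc : ((M - 1 : ℕ) : ℝ) = (M : ℝ) - 1 := by
        have h1 : 1 ≤ M := by omega
        push_cast [h1]
        ring
      have hT : ((M:ℝ) - 1) * (p / n) ≤ p * (1 - p/2 - α) := by
        have h1 : ((M:ℝ) - 1) / (n:ℝ) ≤ (M:ℝ) / n := by
          rw [div_eq_mul_inv, div_eq_mul_inv]
          exact mul_le_mul_of_nonneg_right (by linarith) (by positivity)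
        calc ((M:ℝ) - 1) * (p/n) = p * (((M:ℝ)-1)/n) := by ring
        _ ≤ p * ((M:ℝ)/n) := mul_le_mul_of_nonneg_left h1 hp.le
        _ = p * (1 - p/2 - α) := by rw [← hδn, hδ]; ring
      have hTk : (fib.card : ℝ) * (((M - 1 : ℕ) : ℝ) * (p / n))
          ≤ (fib.card : ℝ) * (p * (1 - p/2 - α)) := by
        rw [hMc]
        exact mul_le_mul_of_nonneg_left hT hkR0
      have hpk : p ^ fib.card ≤ p ^ 2 := pow_le_pow_of_le_one hp.le hp1 hk2
      rw [hcast1]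
      nlinarith [hrk, hpk, hTk, mul_nonneg (mul_nonneg (sub_nonneg.mpr hkR) hp.le) hp.le,
        mul_pos hp hα]
  calc ∑ y : Fin M → Fin n × Bool, (∏ k, q n p (y k)) * (W (step c y) : ℝ) ≤ _ := s1
  _ = _ := s2
  _ ≤ ∑ i, F i := s3
  _ = ∑ w : Fin n, ∑ i ∈ Finset.univ.filter (fun i => c i = w), F i := s4
  _ ≤ ∑ w : Fin n, (1 - p * α)
        * (((Finset.univ.filter (fun i => c i = w)).card - 1 : ℕ) : ℝ) :=
      Finset.sum_le_sum (fun w _ => s5 w)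
  _ = (1 - p * α) * (W c : ℝ) := by
      rw [← Finset.mul_sum]
      congr 1
      rw [W]
      push_cast
      rfl
theorem W_le_M (c : Fin M → Fin n) : W c ≤ M := by
  rw [W]
  calc ∑ w : Fin n, ((Finset.univ.filter (fun i => c i = w)).card - 1)
      ≤ ∑ w : Fin n, (Finset.univ.filter (fun i => c i = w)).card :=
      Finset.sum_le_sum (fun w _ => Nat.sub_le _ _)
  _ = M := by
      rw [← Finset.card_eq_sum_card_fiberwise
        (fun i (_ : i ∈ Finset.univ) => Finset.mem_univ (c i)), Finset.card_univ,
        Fintype.card_fin]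

theorem sum_snoc {A : Type*} [Fintype A] (t : ℕ) (f : (Fin (t+1) → A) → ℝ) :
    ∑ z : Fin (t+1) → A, f z = ∑ z0 : Fin t → A, ∑ a : A, f (Fin.snoc z0 a) := by
  classical
  have hbij : Function.Bijective
      (fun pr : (Fin t → A) × A => (Fin.snoc pr.1 pr.2 : Fin (t+1) → A)) := by
    constructor
    · intro p1 p2 h
      have h1 := congrArg Fin.init h
      have h2 := congrArg (fun zz : Fin (t+1) → A => zz (Fin.last t)) h
      simp only [Fin.init_snoc] at h1
      simp only [Fin.snoc_last] at h2
      exact Prod.ext h1 h2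
    · intro z
      exact ⟨(Fin.init z, z (Fin.last t)), by simp⟩
  calc ∑ z : Fin (t+1) → A, f z
      = ∑ pr : (Fin t → A) × A, f (Fin.snoc pr.1 pr.2) :=
      (Fintype.sum_bijective _ hbij (fun pr => f (Fin.snoc pr.1 pr.2)) f (fun pr => rfl)).symm
  _ = ∑ z0 : Fin t → A, ∑ a : A, f (Fin.snoc z0 a) := Fintype.sum_prod_type _

theorem Dbound (hn : 0 < n) {p α δ : ℝ} (hp : 0 < p) (hp1 : p ≤ 1) (hα : 0 < α)
    (hpα : p * α ≤ 1) (hδ : δ = p / 2 + α) (hM : (M : ℝ) = (1 - δ) * n) (o : Fin n) :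
    ∀ t : ℕ, (∑ z : Fin t → Fin M → Fin n × Bool,
        (∏ s, ∏ i, q n p (z s i)) * (W (g o t z) : ℝ))
      ≤ (1 - p * α) ^ t * (M : ℝ) := by
  intro t
  induction t with
  | zero =>
    rw [pow_zero, one_mul]
    have h1 : ∀ z : Fin 0 → Fin M → Fin n × Bool,
        (∏ s, ∏ i, q n p (z s i)) * (W (g o 0 z) : ℝ)
          = (W (fun _ : Fin M => o) : ℝ) := by
      intro z
      rw [show g o 0 z = fun _ : Fin M => o from rfl]
      simp
    rw [Finset.sum_congr rfl (fun z _ => h1 z), Finset.sum_const, Finset.card_univ]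
    have h2 : Fintype.card (Fin 0 → Fin M → Fin n × Bool) = 1 := by
      simp
    rw [h2, one_smul]
    exact_mod_cast W_le_M (fun _ : Fin M => o)
  | succ t ih =>
    rw [sum_snoc t (fun z : Fin (t+1) → Fin M → Fin n × Bool => (∏ s, ∏ i, q n p (z s i)) * (W (g o (t+1) z) : ℝ))]
    have hw : ∀ (z0 : Fin t → Fin M → Fin n × Bool) (a : Fin M → Fin n × Bool),
        (∏ s : Fin (t+1), ∏ i, q n p ((Fin.snoc z0 a : Fin (t+1) → Fin M → Fin n × Bool) s i))
          = (∏ s : Fin t, ∏ i, q n p (z0 s i)) * ∏ i, q n p (a i) := by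
      intro z0 a
      rw [Fin.prod_univ_castSucc]
      simp
    have hg : ∀ (z0 : Fin t → Fin M → Fin n × Bool) (a : Fin M → Fin n × Bool),
        g o (t+1) (Fin.snoc z0 a) = step (g o t z0) a := by
      intro z0 a
      show step (g o t (fun s => (Fin.snoc z0 a : Fin (t+1) → Fin M → Fin n × Bool) s.castSucc))
        ((Fin.snoc z0 a : Fin (t+1) → Fin M → Fin n × Bool) (Fin.last t)) = _
      simp
    have hν : ∀ z0 : Fin t → Fin M → Fin n × Bool,
        0 ≤ ∏ s : Fin t, ∏ i, q n p (z0 s i) :=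
      fun z0 => Finset.prod_nonneg fun s _ =>
        Finset.prod_nonneg fun i _ => q_nonneg hp.le hp1 _
    calc ∑ z0 : Fin t → Fin M → Fin n × Bool, ∑ a : Fin M → Fin n × Bool,
          (∏ s : Fin (t+1), ∏ i, q n p ((Fin.snoc z0 a : Fin (t+1) → Fin M → Fin n × Bool) s i)) * (W (g o (t+1) (Fin.snoc z0 a)) : ℝ)
        = ∑ z0 : Fin t → Fin M → Fin n × Bool, (∏ s : Fin t, ∏ i, q n p (z0 s i))
            * ∑ a : Fin M → Fin n × Bool, (∏ i, q n p (a i)) * (W (step (g o t z0) a) : ℝ) := by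
          apply Finset.sum_congr rfl
          intro z0 _
          rw [Finset.mul_sum]
          apply Finset.sum_congr rfl
          intro a _
          rw [hw z0 a, hg z0 a]
          ring
    _ ≤ ∑ z0 : Fin t → Fin M → Fin n × Bool, (∏ s : Fin t, ∏ i, q n p (z0 s i))
            * ((1 - p * α) * (W (g o t z0) : ℝ)) := by
          apply Finset.sum_le_sum
          intro z0 _
          exact mul_le_mul_of_nonneg_left (core hn hp hp1 hα hδ hM (g o t z0)) (hν z0)
    _ = (1 - p * α) * ∑ z0 : Fin t → Fin M → Fin n × Bool,
            (∏ s : Fin t, ∏ i, q n p (z0 s i)) * (W (g o t z0) : ℝ) := by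
          rw [Finset.mul_sum]
          apply Finset.sum_congr rfl
          intro z0 _
          ring
    _ ≤ (1 - p * α) * ((1 - p * α) ^ t * (M : ℝ)) := by
          apply mul_le_mul_of_nonneg_left ih
          nlinarith
    _ = (1 - p * α) ^ (t+1) * (M : ℝ) := by
          rw [pow_succ]
          ring
theorem atom_prob {Ω : Type} [MeasurableSpace Ω] (P : Measure Ω) [IsProbabilityMeasure P]
    (XB : ℕ → Fin M → Ω → Fin n × Bool)
    (hind : iIndepFun (fun ti : ℕ × Fin M => XB ti.1 ti.2) P)
    (T : ℕ) (z : Fin T → Fin M → Fin n × Bool) (b₀ : Fin n × Bool) :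
    P {ω | ∀ (s : Fin T) (i : Fin M), XB (s : ℕ) i ω = z s i}
      = ∏ s : Fin T, ∏ i : Fin M, P {ω | XB (s : ℕ) i ω = z s i} := by
  classical
  set zext : ℕ → Fin M → Fin n × Bool :=
    fun s i => if h : s < T then z ⟨s, h⟩ i else b₀ with hzext
  set S : Finset (ℕ × Fin M) := (Finset.range T) ×ˢ Finset.univ with hS
  set sets : (ℕ × Fin M) → Set (Fin n × Bool) := fun k => {zext k.1 k.2} with hsets
  have hmeas : ∀ k ∈ S, MeasurableSet (sets k) := fun k _ => measurableSet_singleton _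
  have hset : {ω : Ω | ∀ (s : Fin T) (i : Fin M), XB (s : ℕ) i ω = z s i}
      = ⋂ k ∈ S, (fun ti : ℕ × Fin M => XB ti.1 ti.2) k ⁻¹' sets k := by
    ext ω
    simp only [Set.mem_setOf_eq, Set.mem_iInter, Set.mem_preimage, hsets,
      Set.mem_singleton_iff, hS, Finset.mem_product, Finset.mem_range, Finset.mem_univ]
    constructor
    · rintro h ⟨s, i⟩ ⟨hs, -⟩
      rw [hzext]
      simp only [dif_pos hs]
      exact h ⟨s, hs⟩ i
    · intro h s i
      have := h ((s : ℕ), i) ⟨s.isLt, trivial⟩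
      rw [hzext] at this
      simpa [dif_pos s.isLt] using this
  rw [hset, hind.measure_inter_preimage_eq_mul S hmeas]
  rw [Finset.prod_product]
  rw [← Fin.prod_univ_eq_prod_range
    (fun s => ∏ i : Fin M, P ((fun ti : ℕ × Fin M => XB ti.1 ti.2) (s, i) ⁻¹' sets (s, i))) T]
  apply Finset.prod_congr rfl
  intro s _
  apply Finset.prod_congr rfl
  intro i _
  congr 1
  ext ω
  simp only [Set.mem_preimage, hsets, Set.mem_singleton_iff, Set.mem_setOf_eq, hzext]
  rw [dif_pos s.isLt]
theorem bad_prob {Ω : Type} [MeasurableSpace Ω] (P : Measure Ω) [IsProbabilityMeasure P]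
    {p : ℝ} (hn : 0 < n) (hp0 : 0 ≤ p) (hp1 : p ≤ 1)
    (XB : ℕ → Fin M → Ω → Fin n × Bool) (o : Fin n)
    (hmeas : ∀ t i, Measurable (XB t i))
    (hq : ∀ t i b, (P {ω | XB t i ω = b}).toReal = q n p b)
    (hind : iIndepFun (fun ti : ℕ × Fin M => XB ti.1 ti.2) P)
    (T : ℕ) :
    (P {ω | ¬ Function.Injective (g o T (fun s i => XB s i ω))}).toReal
      ≤ ∑ z : Fin T → Fin M → Fin n × Bool,
          (∏ s, ∏ i, q n p (z s i)) * (W (g o T z) : ℝ) := by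
  classical
  set Atom : (Fin T → Fin M → Fin n × Bool) → Set Ω :=
    fun z => {ω | ∀ (s : Fin T) (i : Fin M), XB (s : ℕ) i ω = z s i} with hAtom
  set B : Finset (Fin T → Fin M → Fin n × Bool) :=
    Finset.univ.filter (fun z => ¬ Function.Injective (g o T z)) with hB
  have hAtomMeas : ∀ z, MeasurableSet (Atom z) := by
    intro z
    have : Atom z = ⋂ (s : Fin T), ⋂ (i : Fin M), (XB (s:ℕ) i) ⁻¹' {z s i} := by
      ext ω
      simp [hAtom, Set.mem_iInter]
    rw [this]
    exact MeasurableSet.iInter fun s => MeasurableSet.iInter fun i =>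
      (hmeas _ i) (measurableSet_singleton _)
  have hcover : {ω : Ω | ¬ Function.Injective (g o T (fun s i => XB s i ω))}
      = ⋃ z ∈ B, Atom z := by
    ext ω
    simp only [Set.mem_setOf_eq, Set.mem_iUnion, hB, Finset.mem_filter, Finset.mem_univ,
      true_and]
    constructor
    · intro h
      refine ⟨fun s i => XB s i ω, h, ?_⟩
      intro s i
      rfl
    · rintro ⟨z, hz, hω⟩
      have : (fun (s : Fin T) (i : Fin M) => XB (s:ℕ) i ω) = z := by
        funext s i
        exact hω s i
      rwa [this]
  have hdisj : (B : Set (Fin T → Fin M → Fin n × Bool)).PairwiseDisjoint Atom := by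
    intro z1 _ z2 _ hne
    rw [Function.onFun, Set.disjoint_left]
    intro ω h1 h2
    apply hne
    funext s i
    rw [← h1 s i, ← h2 s i]
  have hsum : P {ω : Ω | ¬ Function.Injective (g o T (fun s i => XB s i ω))}
      = ∑ z ∈ B, P (Atom z) := by
    rw [hcover]
    exact measure_biUnion_finset hdisj (fun z _ => hAtomMeas z)
  rw [hsum, ENNReal.toReal_sum (fun z _ => measure_ne_top P _)]
  have hval : ∀ z, (P (Atom z)).toReal = ∏ s, ∏ i, q n p (z s i) := by
    intro z
    rw [hAtom]
    rw [atom_prob P XB hind T z (o, true)]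
    rw [ENNReal.toReal_prod]
    apply Finset.prod_congr rfl
    intro s _
    rw [ENNReal.toReal_prod]
    apply Finset.prod_congr rfl
    intro i _
    exact hq _ i (z s i)
  calc ∑ z ∈ B, (P (Atom z)).toReal = ∑ z ∈ B, ∏ s, ∏ i, q n p (z s i) :=
      Finset.sum_congr rfl (fun z _ => hval z)
  _ ≤ ∑ z ∈ B, (∏ s, ∏ i, q n p (z s i)) * (W (g o T z) : ℝ) := by
      apply Finset.sum_le_sum
      intro z hz
      rw [hB, Finset.mem_filter] at hz
      have h1 : 1 ≤ W (g o T z) := one_le_W hz.2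
      have hν : 0 ≤ ∏ s, ∏ i, q n p (z s i) :=
        Finset.prod_nonneg fun s _ => Finset.prod_nonneg fun i _ => q_nonneg hp0 hp1 _
      have h1R : (1:ℝ) ≤ (W (g o T z) : ℝ) := by exact_mod_cast h1
      nlinarith [h1R, hν]
  _ ≤ ∑ z : Fin T → Fin M → Fin n × Bool, (∏ s, ∏ i, q n p (z s i)) * (W (g o T z) : ℝ) := by
      apply Finset.sum_le_sum_of_subset_of_nonneg (Finset.subset_univ _)
      intro z _ _
      have hν : 0 ≤ ∏ s, ∏ i, q n p (z s i) :=
        Finset.prod_nonneg fun s _ => Finset.prod_nonneg fun i _ => q_nonneg hp0 hp1 _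
      positivity
end LazyDisp

open LazyDisp in
/-- Lazy dispersion on `K_n` with loops, with `M = (1−δ)n` particles and
`δ = p/2 + α`: with probability at least `1 − C/n` the process disperses within
`C·(pα)⁻¹·log n` steps, for an absolute constant `C`. -/
theorem lazy_dispersion_complete_graph_fast :
    ∃ C : ℝ, 0 < C ∧
    ∀ (n : ℕ) (p α δ : ℝ), 0 < p → p ≤ 1 → 0 < α → δ = p / 2 + α →
    ∀ M : ℕ, (M : ℝ) = (1 - δ) * n →
    ∀ (Ω : Type) (_ : MeasurableSpace Ω) (P : Measure Ω), IsProbabilityMeasure P →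
    ∀ (XB : ℕ → Fin M → Ω → Fin n × Bool) (o : Fin n),
    (∀ t i, Measurable (XB t i)) →
    (∀ t i (v : Fin n), (P {ω | XB t i ω = (v, true)}).toReal = p / n) →
    (∀ t i (v : Fin n), (P {ω | XB t i ω = (v, false)}).toReal = (1 - p) / n) →
    iIndepFun (fun ti : ℕ × Fin M => XB ti.1 ti.2) P →
    (P {ω | ∃ t : ℕ, (t : ℝ) ≤ C * (1 / (p * α)) * Real.log n ∧
        Function.Injective
          (lazyPos o (fun s j => (XB s j ω).1) (fun s j => (XB s j ω).2) t)}).toReal ≥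
      1 - C / n := by

  classical
  refine ⟨4, by norm_num, ?_⟩
  intro n p α δ hp hp1 hα hδ M hM Ω mΩ P hPprob XB o hXBmeas hXt hXf hind
  have hn : 0 < n := o.pos
  have hnR : (0:ℝ) < n := by exact_mod_cast hn
  have hn1R : (1:ℝ) ≤ n := by exact_mod_cast hn
  have hlogn : 0 ≤ Real.log n := Real.log_nonneg hn1R
  have hpα : 0 < p * α := mul_pos hp hα
  set Ev : Set Ω := {ω | ∃ t : ℕ, (t : ℝ) ≤ 4 * (1 / (p * α)) * Real.log n ∧
      Function.Injective
        (lazyPos o (fun s j => (XB s j ω).1) (fun s j => (XB s j ω).2) t)} with hEv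
  rcases Nat.eq_zero_or_pos M with hM0 | hM1
  · -- no particles: trivially dispersed at time 0
    have hEvuniv : Ev = Set.univ := by
      apply Set.eq_univ_of_forall
      intro ω
      rw [hEv]
      refine ⟨0, by push_cast; positivity, ?_⟩
      intro a b _
      subst hM0
      exact a.elim0
    rw [hEvuniv]
    rw [measure_univ, ENNReal.toReal_one]
    have : (0:ℝ) ≤ 4 / n := by positivity
    linarith
  · -- main case
    have hM1R : (1:ℝ) ≤ M := by exact_mod_cast hM1
    have hδ1 : δ < 1 := by
      by_contra hc
      push_neg at hc
      have : (M:ℝ) ≤ 0 := by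
        rw [hM]
        have : (1:ℝ) - δ ≤ 0 := by linarith
        nlinarith
      linarith
    have hα1 : α < 1 := by
      rw [hδ] at hδ1
      linarith
    have hpα1 : p * α < 1 :=
      lt_of_le_of_lt (mul_le_of_le_one_left hα.le hp1) hα1
    have hMn : (M:ℝ) < n := by
      rw [hM]
      have hδ0 : 0 < δ := by rw [hδ]; positivity
      nlinarith
    have hn2 : 2 ≤ n := by
      have : M < n := by exact_mod_cast hMn
      omega
    have hn2R : (2:ℝ) ≤ n := by exact_mod_cast hn2
    have hlog2 : Real.log 2 ≤ Real.log n := by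
      apply Real.log_le_log (by norm_num) hn2R
    have hlog2' : (0.6931471803 : ℝ) < Real.log 2 := Real.log_two_gt_d9
    -- the time horizon
    set T : ℕ := ⌈(2 / (p * α)) * Real.log n⌉₊ with hT
    set L : ℝ := (2 / (p * α)) * Real.log n with hL
    have hL0 : 0 ≤ L := by positivity
    have hL1 : 1 ≤ L := by
      have h3 : 2 ≤ 2 / (p * α) := by
        rw [le_div_iff₀ hpα]
        nlinarith
      have h4 : 2 * Real.log 2 ≤ L := by
        rw [hL]
        apply mul_le_mul h3 hlog2 (by linarith) (by positivity)
      nlinarith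
    have hTL : (T:ℝ) ≤ 2 * L := by
      have h1 : (T:ℝ) < L + 1 := Nat.ceil_lt_add_one hL0
      linarith
    have hTbound : (T:ℝ) ≤ 4 * (1 / (p * α)) * Real.log n := by
      calc (T:ℝ) ≤ 2 * L := hTL
      _ = 4 * (1 / (p * α)) * Real.log n := by rw [hL]; ring
    -- the exponential bound
    have hTge : L ≤ (T:ℝ) := Nat.le_ceil _
    have hexp1 : (1 - p * α) ^ T ≤ Real.exp (-(p * α) * T) := by
      have h1 : 1 - p * α ≤ Real.exp (-(p * α)) := by
        have := Real.add_one_le_exp (-(p * α))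
        linarith
      calc (1 - p * α) ^ T ≤ Real.exp (-(p * α)) ^ T :=
            pow_le_pow_left₀ (by linarith : (0:ℝ) ≤ 1 - p * α) h1 T
      _ = Real.exp (-(p * α) * T) := by
            rw [← Real.exp_nat_mul]
            congr 1
            ring
    have hexp2 : Real.exp (-(p * α) * T) ≤ 1 / ((n:ℝ)^2) := by
      have h1 : 2 * Real.log n ≤ (p * α) * T := by
        have := mul_le_mul_of_nonneg_left hTge hpα.le
        calc 2 * Real.log n = (p * α) * L := by
              rw [hL]
              field_simp
        _ ≤ (p * α) * T := this
      calc Real.exp (-(p * α) * T) ≤ Real.exp (-(2 * Real.log n)) := by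
            apply Real.exp_le_exp.mpr
            linarith
      _ = 1 / ((n:ℝ)^2) := by
            rw [Real.exp_neg]
            congr 1
            rw [two_mul, Real.exp_add, Real.exp_log hnR]
            ring
    have hDT : (1 - p * α) ^ T * (M:ℝ) ≤ 1 / n := by
      have h1 : (1 - p * α) ^ T * (M:ℝ) ≤ Real.exp (-(p * α) * T) * n := by
        apply mul_le_mul hexp1 hMn.le (by positivity) (by positivity)
      calc (1 - p * α) ^ T * (M:ℝ) ≤ Real.exp (-(p * α) * T) * n := h1
      _ ≤ (1 / ((n:ℝ)^2)) * n := by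
          apply mul_le_mul_of_nonneg_right hexp2 (by positivity)
      _ = 1 / n := by field_simp
    -- marginals
    have hq : ∀ t i b, (P {ω | XB t i ω = b}).toReal = LazyDisp.q n p b := by
      intro t i b
      obtain ⟨v, bb⟩ := b
      cases bb
      · rw [show LazyDisp.q n p (v, false) = (1 - p)/n from rfl]
        exact hXf t i v
      · rw [show LazyDisp.q n p (v, true) = p/n from rfl]
        exact hXt t i v
    -- bad event bound
    have hbad : (P {ω | ¬ Function.Injective (g o T (fun s i => XB s i ω))}).toReal
        ≤ 1 / n := by
      calc (P {ω | ¬ Function.Injective (g o T (fun s i => XB s i ω))}).toReal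
          ≤ ∑ z : Fin T → Fin M → Fin n × Bool,
            (∏ s, ∏ i, LazyDisp.q n p (z s i)) * (W (g o T z) : ℝ) :=
          bad_prob P hn hp.le hp1 XB o hXBmeas hq hind T
      _ ≤ (1 - p * α) ^ T * (M:ℝ) := Dbound hn hp hp1 hα hpα1.le hδ hM o T
      _ ≤ 1 / n := hDT
    -- measurability of the bad event
    have hZmeas : Measurable (fun ω => (fun (s : Fin T) (i : Fin M) => XB s i ω)) :=
      measurable_pi_lambda _ (fun s => measurable_pi_lambda _ (fun i => hXBmeas s i))
    have hBadMeas : MeasurableSet {ω : Ω | ¬ Function.Injective (g o T (fun s i => XB s i ω))} := by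
      have : {ω : Ω | ¬ Function.Injective (g o T (fun s i => XB s i ω))}
          = (fun ω => (fun (s : Fin T) (i : Fin M) => XB s i ω)) ⁻¹'
            {z | ¬ Function.Injective (g o T z)} := rfl
      rw [this]
      exact hZmeas (Set.Countable.measurableSet (Set.to_countable _))
    -- good event
    have hGoodEv : {ω : Ω | Function.Injective (g o T (fun s i => XB s i ω))} ⊆ Ev := by
      intro ω hω
      rw [hEv]
      refine ⟨T, hTbound, ?_⟩
      rw [bridge o (fun s j => (XB s j ω).1) (fun s j => (XB s j ω).2) T]
      have : (fun (s : Fin T) (i : Fin M) => ((XB (s:ℕ) i ω).1, (XB (s:ℕ) i ω).2))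
          = fun (s : Fin T) (i : Fin M) => XB (s:ℕ) i ω := by
        funext s i
        exact Prod.mk.eta
      rw [this]
      exact hω
    have hcompl : {ω : Ω | Function.Injective (g o T (fun s i => XB s i ω))}
        = {ω : Ω | ¬ Function.Injective (g o T (fun s i => XB s i ω))}ᶜ := by
      ext ω
      simp
    have hPgood : (P {ω : Ω | Function.Injective (g o T (fun s i => XB s i ω))}).toReal
        = 1 - (P {ω : Ω | ¬ Function.Injective (g o T (fun s i => XB s i ω))}).toReal := by
      rw [hcompl, prob_compl_eq_one_sub hBadMeas,
        ENNReal.toReal_sub_of_le prob_le_one ENNReal.one_ne_top, ENNReal.toReal_one]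
    have hmono : (P {ω : Ω | Function.Injective (g o T (fun s i => XB s i ω))}).toReal
        ≤ (P Ev).toReal := by
      apply ENNReal.toReal_mono (measure_ne_top P Ev)
      exact measure_mono hGoodEv
    have h4n : 1 / (n:ℝ) ≤ 4 / n := by
      gcongr
      norm_num
    rw [ge_iff_le]
    calc 1 - 4 / (n:ℝ) ≤ 1 - 1 / n := by linarith
    _ ≤ 1 - (P {ω : Ω | ¬ Function.Injective (g o T (fun s i => XB s i ω))}).toReal := by
        linarith
    _ = (P {ω : Ω | Function.Injective (g o T (fun s i => XB s i ω))}).toReal := hPgood.symm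
    _ ≤ (P Ev).toReal := hmono
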